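/- Let F be a free group with basis X, let φ be an automorphism of F with bounded cancellation constant C (i.e., |[φ(uv)]| ≥ |[φ(u)]| + |[φ(v)]| − 2C whenever uv is reduced). If p is a prefix of a reduced word q (i.e., q = p·q' reduced), and we write [φ(p)] = a·b where a is the maximal common prefix of [φ(p)] and [φ(q)], then |b| ≤ C. -/

import Mathlib

/-- No cancellation between adjacent letters. -/
def FGRel {α : Type*} (x y : α × Bool) : Prop := ¬(x.1 = y.1 ∧ x.2 = !y.2)

section Aux
variable {α : Type*} [DecidableEq α]

theorem fg_reduce_eq_self_iff_chain' (L : List (α × Bool)) :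
    FreeGroup.reduce L = L ↔ List.Chain' FGRel L := by
  induction L with
  | nil => simp [List.Chain']
  | cons x L ih =>
    constructor
    · intro h
      rcases hL : FreeGroup.reduce L with _ | ⟨hd, tl⟩
      · have h1 : FreeGroup.reduce (x :: L) = [x] := by rw [FreeGroup.reduce.cons, hL]
        rw [h] at h1
        rw [h1]
        exact List.isChain_singleton x
      · by_cases hc : x.1 = hd.1 ∧ x.2 = !hd.2
        · exfalso
          have h1 : FreeGroup.reduce (x :: L) = tl := by
            rw [FreeGroup.reduce.cons, hL]; simp [hc]
          rw [h] at h1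
          have h2 : (FreeGroup.reduce L).length ≤ L.length :=
            FreeGroup.Red.length_le FreeGroup.reduce.red
          rw [hL] at h2
          have h3 := congrArg List.length h1
          simp at h2 h3
          omega
        · have h1 : FreeGroup.reduce (x :: L) = x :: hd :: tl := by
            rw [FreeGroup.reduce.cons, hL]; simp [hc]
          rw [h] at h1
          have h2 : L = hd :: tl := by injection h1
          have h3 : List.Chain' FGRel L := ih.mp (by rw [hL, h2])
          rw [h2] at h3 ⊢
          exact List.isChain_cons_cons.mpr ⟨hc, h3⟩
    · intro h
      rcases hL2 : L with _ | ⟨hd, tl⟩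
      · rfl
      · subst hL2
        rw [List.Chain', List.isChain_cons_cons] at h
        have h1 : FreeGroup.reduce (hd :: tl) = hd :: tl := ih.mpr h.2
        rw [FreeGroup.reduce.cons, h1]
        exact if_neg h.1

theorem fg_norm_mk_of_reduced {L : List (α × Bool)} (h : FreeGroup.reduce L = L) :
    (FreeGroup.mk L).norm = L.length := by
  rw [FreeGroup.norm, FreeGroup.toWord_mk, h]

theorem fg_exists_cancel_letter (b w : FreeGroup α) (h : (b * w).norm < b.norm + w.norm) :
    ∃ b' w' x : FreeGroup α, b = b' * x ∧ w = x⁻¹ * w' ∧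
      b.norm = b'.norm + 1 ∧ w.norm = w'.norm + 1 ∧ x.norm = 1 := by
  set L := b.toWord with hLdef
  set M := w.toWord with hMdef
  have hLred : FreeGroup.reduce L = L := FreeGroup.reduce_toWord b
  have hMred : FreeGroup.reduce M = M := FreeGroup.reduce_toWord w
  have hbw : b * w = FreeGroup.mk (L ++ M) := by
    rw [← FreeGroup.mul_mk, hLdef, hMdef, FreeGroup.mk_toWord, FreeGroup.mk_toWord]
  have hbn : b.norm = L.length := rfl
  have hwn : w.norm = M.length := rfl
  have hL : L ≠ [] := by
    intro h0
    have hb1 : b = 1 := FreeGroup.toWord_eq_nil_iff.mp h0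
    rw [hb1, one_mul] at h
    simp [hb1] at h
  have hM : M ≠ [] := by
    intro h0
    have hw1 : w = 1 := FreeGroup.toWord_eq_nil_iff.mp h0
    rw [hw1, mul_one] at h
    simp [hw1] at h
  have hcanc : ¬ FGRel (L.getLast hL) (M.head hM) := by
    intro hrel
    have hch : List.Chain' FGRel (L ++ M) := by
      apply List.IsChain.append ((fg_reduce_eq_self_iff_chain' L).mp hLred)
        ((fg_reduce_eq_self_iff_chain' M).mp hMred)
      intro x hx y hy
      rw [List.getLast?_eq_getLast hL] at hx
      rw [List.head?_eq_head hM] at hy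
      rw [Option.mem_some_iff] at hx hy
      rw [← hx, ← hy]
      exact hrel
    have : (b * w).norm = L.length + M.length := by
      rw [hbw, fg_norm_mk_of_reduced ((fg_reduce_eq_self_iff_chain' _).mpr hch),
        List.length_append]
    omega
  rw [FGRel, not_not] at hcanc
  refine ⟨FreeGroup.mk L.dropLast, FreeGroup.mk M.tail, FreeGroup.mk [L.getLast hL], ?_, ?_, ?_, ?_, ?_⟩
  · rw [FreeGroup.mul_mk, List.dropLast_append_getLast hL, hLdef, FreeGroup.mk_toWord]
  · have hpair : ((L.getLast hL).1, !(L.getLast hL).2) = M.head hM := by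
      rw [Prod.ext_iff]
      exact ⟨hcanc.1, by rw [hcanc.2, Bool.not_not]⟩
    have hinv : (FreeGroup.mk [L.getLast hL])⁻¹ = FreeGroup.mk [M.head hM] := by
      rw [FreeGroup.inv_mk]
      congr 1
      rw [show FreeGroup.invRev [L.getLast hL]
          = [((L.getLast hL).1, !(L.getLast hL).2)] from by simp [FreeGroup.invRev], hpair]
    rw [hinv, FreeGroup.mul_mk]
    have : (M.head hM) :: M.tail = M := List.cons_head_tail hM
    rw [List.singleton_append, this, hMdef, FreeGroup.mk_toWord]
  · have hred : FreeGroup.reduce L.dropLast = L.dropLast :=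
      (fg_reduce_eq_self_iff_chain' _).mpr
        (((fg_reduce_eq_self_iff_chain' L).mp hLred).prefix (List.dropLast_prefix L))
    have hLpos : 0 < L.length := List.length_pos_iff.mpr hL
    rw [hbn, fg_norm_mk_of_reduced hred, List.length_dropLast]
    omega
  · have hred : FreeGroup.reduce M.tail = M.tail :=
      (fg_reduce_eq_self_iff_chain' _).mpr ((fg_reduce_eq_self_iff_chain' M).mp hMred).tail
    have hMpos : 0 < M.length := List.length_pos_iff.mpr hM
    rw [hwn, fg_norm_mk_of_reduced hred, List.length_tail]
    omega
  · rw [fg_norm_mk_of_reduced (FreeGroup.reduce_singleton _)]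
    rfl

theorem fg_exists_max_cancel (b w : FreeGroup α) :
    ∃ b₁ c w₁ : FreeGroup α, b = b₁ * c ∧ w = c⁻¹ * w₁ ∧
      b.norm = b₁.norm + c.norm ∧ w.norm = c.norm + w₁.norm ∧
      (b * w).norm = b₁.norm + w₁.norm := by
  have H : ∀ n : ℕ, ∀ b w : FreeGroup α, b.norm = n →
      ∃ b₁ c w₁ : FreeGroup α, b = b₁ * c ∧ w = c⁻¹ * w₁ ∧
        b.norm = b₁.norm + c.norm ∧ w.norm = c.norm + w₁.norm ∧
        (b * w).norm = b₁.norm + w₁.norm := by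
    intro n
    induction n using Nat.strong_induction_on with
    | _ n ih =>
      intro b w hn
      by_cases heq : (b * w).norm = b.norm + w.norm
      · exact ⟨b, 1, w, by simp, by simp, by simp, by simp, by simpa using heq⟩
      · have hlt : (b * w).norm < b.norm + w.norm :=
          lt_of_le_of_ne (FreeGroup.norm_mul_le b w) heq
        obtain ⟨b', w', x, hb', hw', hbn', hwn', hxn⟩ := fg_exists_cancel_letter b w hlt
        have hbw : b * w = b' * w' := by
          rw [hb', hw']; group
        obtain ⟨b₁, c', w₁, hb₁, hw₁, hbn₁, hwn₁, hbwn₁⟩ :=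
          ih b'.norm (by omega) b' w' rfl
        refine ⟨b₁, c' * x, w₁, ?_, ?_, ?_, ?_, ?_⟩
        · rw [hb', hb₁, mul_assoc]
        · rw [hw', hw₁, mul_inv_rev, mul_assoc]
        · have h1 : (c' * x).norm ≤ c'.norm + 1 := by
            have := FreeGroup.norm_mul_le c' x; omega
          have h2 : b.norm ≤ b₁.norm + (c' * x).norm := by
            have h3 : b = b₁ * (c' * x) := by rw [hb', hb₁, mul_assoc]
            rw [h3]; exact FreeGroup.norm_mul_le _ _
          omega
        · have h1 : (c' * x).norm ≤ c'.norm + 1 := by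
            have := FreeGroup.norm_mul_le c' x; omega
          have h2 : b.norm ≤ b₁.norm + (c' * x).norm := by
            have h3 : b = b₁ * (c' * x) := by rw [hb', hb₁, mul_assoc]
            rw [h3]; exact FreeGroup.norm_mul_le _ _
          omega
        · rw [hbw]; exact hbwn₁
  exact H b.norm b w rfl

end Aux

/-- `a` is a prefix of `x` as reduced words: `x = a * t` without cancellation. -/
def FGPrefix {α : Type*} [DecidableEq α] (a x : FreeGroup α) : Prop :=
  ∃ t : FreeGroup α, x = a * t ∧ x.norm = a.norm + t.norm

/-- If `φ` is an automorphism of a free group with bounded cancellation constant `C`,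
`p` is a prefix of the reduced word `q`, and `[φ p] = a * b` where `a` is the maximal
common prefix of `[φ p]` and `[φ q]`, then `|b| ≤ C`. -/
theorem prefix_image_close {α : Type*} [DecidableEq α]
    (φ : FreeGroup α ≃* FreeGroup α) (C : ℕ)
    (hC : ∀ u v : FreeGroup α, (u * v).norm = u.norm + v.norm →
      ((φ u).norm : ℤ) + ((φ v).norm : ℤ) - 2 * (C : ℤ) ≤ ((φ (u * v)).norm : ℤ))
    (p q : FreeGroup α) (hpq : FGPrefix p q)
    (a b : FreeGroup α) (hab : φ p = a * b)
    (hsplit : (φ p).norm = a.norm + b.norm)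
    (haq : FGPrefix a (φ q))
    (hmax : ∀ a' : FreeGroup α, FGPrefix a' (φ p) → FGPrefix a' (φ q) →
      a'.norm ≤ a.norm) :
    b.norm ≤ C := by
  obtain ⟨q', hq, hqn⟩ := hpq
  obtain ⟨t, hqt, hqtn⟩ := haq
  set w := φ q' with hwdef
  have hφq : φ q = a * b * w := by rw [hq, map_mul, hab]
  have ht : t = b * w := by
    have h1 : a * t = a * (b * w) := by rw [← hqt, hφq, mul_assoc]
    exact mul_left_cancel h1
  obtain ⟨b₁, c, w₁, hb, hw, hbn, hwn, hbwn⟩ := fg_exists_max_cancel b w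
  have htn : t.norm = b₁.norm + w₁.norm := by rw [ht]; exact hbwn
  have hab₁ : (a * b₁).norm = a.norm + b₁.norm := by
    have h1 := FreeGroup.norm_mul_le a b₁
    have h3 : φ p = (a * b₁) * c := by rw [hab, hb, mul_assoc]
    have h2 : (φ p).norm ≤ (a * b₁).norm + c.norm := by
      rw [h3]; exact FreeGroup.norm_mul_le _ _
    omega
  have hp1 : FGPrefix (a * b₁) (φ p) :=
    ⟨c, by rw [hab, hb, mul_assoc], by omega⟩
  have hq1 : FGPrefix (a * b₁) (φ q) := by
    refine ⟨w₁, ?_, by omega⟩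
    rw [hφq, hb, hw]; group
  have hb₁0 : b₁.norm = 0 := by
    have := hmax _ hp1 hq1; omega
  have hkey := hC p q' (by rw [← hq]; exact hqn)
  rw [← hq] at hkey
  have hq2 : (φ q).norm = a.norm + b₁.norm + w₁.norm := by omega
  have hp2 : (φ p).norm = a.norm + b.norm := hsplit
  rw [hq2, hp2, ← hwdef] at hkey
  push_cast at hkey
  omega
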